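/- Let f : ℝ^{d×m} → ℝ be L-smooth and bounded below by f_inf, and let γ > 0. Let (θ_t)_{t=0}^{T+1} be the iterates of Mano without momentum with constant step size η > 0: g_t = ∇f(θ_t), v_t the column-wise tangent projection of g_t at θ_t, v̂_t its column-normalization, and θ_{t+1} = θ_t − η√m · v̂_t. Assume for all t ≤ T that every column of θ_t and of v_t is nonzero and that ‖v_t^{(j)}‖₂ ≥ γ ‖g_t^{(j)}‖₂ for every column j. Then (1/(T+1)) Σ_{t=0}^{T} ‖∇f(θ_t)‖_F ≤ (f(θ_0) − f_inf)/((T+1) m^{1/2} γ η) + L m^{3/2} η/(2γ). -/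

import Mathlib

open scoped BigOperators InnerProductSpace

/-- Euclidean norm of the `j`-th column of a matrix in
`ℝ^{d×m} = EuclideanSpace ℝ (Fin d × Fin m)`. -/
noncomputable def colNormE {d m : ℕ} (A : EuclideanSpace ℝ (Fin d × Fin m)) (j : Fin m) : ℝ :=
  Real.sqrt (∑ i, A (i, j) ^ 2)

/-- Column-normalization: each column is divided by its Euclidean norm. -/
noncomputable def colNormalizeE {d m : ℕ} (A : EuclideanSpace ℝ (Fin d × Fin m)) :
    EuclideanSpace ℝ (Fin d × Fin m) :=
  WithLp.toLp 2 (fun p => A p / colNormE A p.2)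

/-- Column-wise tangent projection of `g` at `θ`:
`v^{(j)} = g^{(j)} − ⟨g^{(j)}, θ̂^{(j)}⟩ θ̂^{(j)}` with `θ̂` the column-normalization of `θ`. -/
noncomputable def tangentProjE {d m : ℕ} (θ g : EuclideanSpace ℝ (Fin d × Fin m)) :
    EuclideanSpace ℝ (Fin d × Fin m) :=
  WithLp.toLp 2 (fun p => g p - (∑ i, g (i, p.2) * colNormalizeE θ (i, p.2)) * colNormalizeE θ p)

lemma colNormE_sq {d m : ℕ} (A : EuclideanSpace ℝ (Fin d × Fin m)) (j : Fin m) :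
    colNormE A j ^ 2 = ∑ i, A (i, j) ^ 2 := by
  rw [colNormE, Real.sq_sqrt (Finset.sum_nonneg fun i _ => sq_nonneg _)]

lemma norm_sq_eq_sum_col {d m : ℕ} (A : EuclideanSpace ℝ (Fin d × Fin m)) :
    ‖A‖ ^ 2 = ∑ j, colNormE A j ^ 2 := by
  simp_rw [colNormE_sq]
  rw [EuclideanSpace.norm_eq, Real.sq_sqrt (by positivity)]
  rw [Fintype.sum_prod_type, Finset.sum_comm]
  simp [sq_abs]

lemma inner_eq_sum {d m : ℕ} (g w : EuclideanSpace ℝ (Fin d × Fin m)) :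
    ⟪g, w⟫_ℝ = ∑ j, ∑ i, g (i, j) * w (i, j) := by
  rw [PiLp.inner_apply]
  simp only [RCLike.inner_apply, conj_trivial]
  rw [Fintype.sum_prod_type, Finset.sum_comm]
  exact Finset.sum_congr rfl fun _ _ => Finset.sum_congr rfl fun _ _ => mul_comm _ _

lemma colNormE_nonneg {d m : ℕ} (A : EuclideanSpace ℝ (Fin d × Fin m)) (j : Fin m) :
    0 ≤ colNormE A j := Real.sqrt_nonneg _

lemma sum_gv {d m : ℕ} (θ g : EuclideanSpace ℝ (Fin d × Fin m)) (j : Fin m)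
    (hθ : colNormE θ j ≠ 0) :
    ∑ i, g (i, j) * tangentProjE θ g (i, j) = colNormE (tangentProjE θ g) j ^ 2 := by
  rw [colNormE_sq]
  set c := ∑ i, g (i, j) * colNormalizeE θ (i, j) with hc
  have hth2 : ∑ i, colNormalizeE θ (i, j) ^ 2 = 1 := by
    simp only [colNormalizeE, PiLp.toLp_apply, div_pow]
    rw [← Finset.sum_div, ← colNormE_sq]
    field_simp
  have hv : ∀ i : Fin d, tangentProjE θ g (i, j) = g (i, j) - c * colNormalizeE θ (i, j) :=
    fun i => rfl
  have horth : ∑ i, colNormalizeE θ (i, j) * tangentProjE θ g (i, j) = 0 := by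
    have h1 : ∀ i ∈ Finset.univ, colNormalizeE θ (i, j) * tangentProjE θ g (i, j)
        = g (i, j) * colNormalizeE θ (i, j) - c * colNormalizeE θ (i, j) ^ 2 := by
      intro i _; rw [hv]; ring
    rw [Finset.sum_congr rfl h1, Finset.sum_sub_distrib, ← Finset.mul_sum, hth2, ← hc]
    ring
  have h2 : ∀ i ∈ Finset.univ, g (i, j) * tangentProjE θ g (i, j)
      = tangentProjE θ g (i, j) ^ 2 + c * (colNormalizeE θ (i, j) * tangentProjE θ g (i, j)) := by
    intro i _; rw [hv]; ring
  rw [Finset.sum_congr rfl h2, Finset.sum_add_distrib, ← Finset.mul_sum, horth, mul_zero, add_zero]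

lemma inner_tangent {d m : ℕ} (θ g : EuclideanSpace ℝ (Fin d × Fin m))
    (hθ : ∀ j, colNormE θ j ≠ 0) (hv : ∀ j, colNormE (tangentProjE θ g) j ≠ 0) :
    ⟪g, colNormalizeE (tangentProjE θ g)⟫_ℝ = ∑ j, colNormE (tangentProjE θ g) j := by
  rw [inner_eq_sum]
  refine Finset.sum_congr rfl fun j _ => ?_
  have : ∀ i : Fin d, g (i, j) * colNormalizeE (tangentProjE θ g) (i, j)
      = g (i, j) * tangentProjE θ g (i, j) / colNormE (tangentProjE θ g) j := by
    intro i; simp [colNormalizeE, mul_div_assoc]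
  rw [Finset.sum_congr rfl fun i _ => this i, ← Finset.sum_div, sum_gv θ g j (hθ j), sq]
  field_simp

lemma norm_colNormalize_sq {d m : ℕ} (v : EuclideanSpace ℝ (Fin d × Fin m))
    (hv : ∀ j, colNormE v j ≠ 0) :
    ‖colNormalizeE v‖ ^ 2 = m := by
  rw [norm_sq_eq_sum_col]
  have h1 : ∀ j ∈ Finset.univ, colNormE (colNormalizeE v) j ^ 2 = 1 := by
    intro j _
    rw [colNormE_sq]
    simp only [colNormalizeE, PiLp.toLp_apply, div_pow]
    rw [← Finset.sum_div, ← colNormE_sq]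
    exact div_self (pow_ne_zero 2 (hv j))
  rw [Finset.sum_congr rfl h1, Finset.sum_const, Finset.card_univ, Fintype.card_fin,
    nsmul_eq_mul, mul_one]

lemma norm_le_sum_col {d m : ℕ} (g : EuclideanSpace ℝ (Fin d × Fin m)) :
    ‖g‖ ≤ ∑ j, colNormE g j := by
  have h1 : ‖g‖ ^ 2 ≤ (∑ j, colNormE g j) ^ 2 := by
    rw [norm_sq_eq_sum_col]
    calc ∑ j, colNormE g j ^ 2 = ∑ j, colNormE g j * colNormE g j := by simp [sq]
      _ ≤ ∑ j, colNormE g j * ∑ k, colNormE g k := by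
          refine Finset.sum_le_sum fun j _ => ?_
          exact mul_le_mul_of_nonneg_left
            (Finset.single_le_sum (fun k _ => colNormE_nonneg g k) (Finset.mem_univ j))
            (colNormE_nonneg g j)
      _ = (∑ j, colNormE g j) ^ 2 := by rw [← Finset.sum_mul]; ring
  have h2 : 0 ≤ ∑ j, colNormE g j := Finset.sum_nonneg fun j _ => colNormE_nonneg g j
  nlinarith [norm_nonneg g]

/-- average-gradient bound for Mano without momentum: for `L`-smooth `f`
bounded below by `finf`, Mano iterates `θ_{t+1} = θ_t − η√m · v̂_t` (with `v̂_t` the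
column-normalized tangent projection of `∇f(θ_t)` at `θ_t`), nonzero columns, and
`‖v_t^{(j)}‖₂ ≥ γ‖g_t^{(j)}‖₂`, one has
`(1/(T+1)) Σ_t ‖∇f(θ_t)‖_F ≤ (f(θ_0) − finf)/((T+1) m^{1/2} γ η) + L m^{3/2} η/(2γ)`. -/
theorem mano_average_gradient_bound {d m : ℕ} (L finf γ : ℝ) (hγ : 0 < γ) (T : ℕ)
    (f : EuclideanSpace ℝ (Fin d × Fin m) → ℝ)
    (hdiff : Differentiable ℝ f)
    (hsmooth : ∀ x y : EuclideanSpace ℝ (Fin d × Fin m),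
      f y ≤ f x + ⟪gradient f x, y - x⟫_ℝ + L / 2 * ‖y - x‖ ^ 2)
    (hbound : ∀ x, finf ≤ f x)
    (η : ℝ) (hη : 0 < η)
    (θ : ℕ → EuclideanSpace ℝ (Fin d × Fin m))
    (hupd : ∀ t ≤ T, θ (t + 1) =
      θ t - (η * Real.sqrt m) • colNormalizeE (tangentProjE (θ t) (gradient f (θ t))))
    (hθcol : ∀ t ≤ T, ∀ j : Fin m, colNormE (θ t) j ≠ 0)
    (hvcol : ∀ t ≤ T, ∀ j : Fin m,
      colNormE (tangentProjE (θ t) (gradient f (θ t))) j ≠ 0)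
    (hsin : ∀ t ≤ T, ∀ j : Fin m,
      γ * colNormE (gradient f (θ t)) j ≤
        colNormE (tangentProjE (θ t) (gradient f (θ t))) j) :
    (1 / (T + 1 : ℝ)) * ∑ t ∈ Finset.range (T + 1), ‖gradient f (θ t)‖ ≤
      (f (θ 0) - finf) / ((T + 1 : ℝ) * Real.sqrt m * γ * η) +
        L * ((m : ℝ) * Real.sqrt m) * η / (2 * γ) := by
  rcases Nat.eq_zero_or_pos m with hm | hm
  · subst hm
    simp [EuclideanSpace.norm_eq]
  have hT : (0:ℝ) < T + 1 := by positivity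
  have hmr : (0:ℝ) < (m:ℝ) := by exact_mod_cast hm
  have hs : (0:ℝ) < Real.sqrt m := Real.sqrt_pos.2 hmr
  have hmm : Real.sqrt m * Real.sqrt m = (m:ℝ) := Real.mul_self_sqrt (Nat.cast_nonneg m)
  -- per-step descent
  have key : ∀ t ≤ T, η * Real.sqrt m * γ * ‖gradient f (θ t)‖ ≤
      f (θ t) - f (θ (t + 1)) + L / 2 * (η ^ 2 * (m:ℝ) ^ 2) := by
    intro t ht
    set g := gradient f (θ t) with hg
    set v := tangentProjE (θ t) g with hvdef
    have hdiff1 : θ (t + 1) - θ t = -((η * Real.sqrt m) • colNormalizeE v) := by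
      rw [hupd t ht]; abel
    have hinner : ⟪g, θ (t + 1) - θ t⟫_ℝ
        = -(η * Real.sqrt m * ∑ j, colNormE v j) := by
      rw [hdiff1, inner_neg_right, real_inner_smul_right,
        inner_tangent (θ t) g (hθcol t ht) (hvcol t ht)]
    have hnorm2 : ‖θ (t + 1) - θ t‖ ^ 2 = η ^ 2 * (m:ℝ) ^ 2 := by
      rw [hdiff1, norm_neg, norm_smul, mul_pow, norm_colNormalize_sq v (hvcol t ht)]
      rw [Real.norm_eq_abs, sq_abs, mul_pow, Real.sq_sqrt (Nat.cast_nonneg m)]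
      ring
    have hglb : γ * ‖g‖ ≤ ∑ j, colNormE v j := by
      calc γ * ‖g‖ ≤ γ * ∑ j, colNormE g j :=
            mul_le_mul_of_nonneg_left (norm_le_sum_col g) hγ.le
        _ = ∑ j, γ * colNormE g j := Finset.mul_sum _ _ _
        _ ≤ ∑ j, colNormE v j := Finset.sum_le_sum fun j _ => hsin t ht j
    have h1 := hsmooth (θ t) (θ (t + 1))
    rw [hinner, hnorm2] at h1
    have h2 : η * Real.sqrt m * (γ * ‖g‖) ≤ η * Real.sqrt m * ∑ j, colNormE v j :=
      mul_le_mul_of_nonneg_left hglb (by positivity)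
    nlinarith
  -- sum over steps
  set S := ∑ t ∈ Finset.range (T + 1), ‖gradient f (θ t)‖ with hS
  have hsum : η * Real.sqrt m * γ * S ≤
      (f (θ 0) - finf) + (T + 1 : ℝ) * (L / 2 * (η ^ 2 * (m:ℝ) ^ 2)) := by
    have h3 : ∑ t ∈ Finset.range (T + 1), (η * Real.sqrt m * γ * ‖gradient f (θ t)‖) ≤
        ∑ t ∈ Finset.range (T + 1),
          (f (θ t) - f (θ (t + 1)) + L / 2 * (η ^ 2 * (m:ℝ) ^ 2)) := by
      refine Finset.sum_le_sum fun t ht => ?_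
      exact key t (Nat.lt_succ_iff.mp (Finset.mem_range.mp ht))
    rw [Finset.sum_add_distrib, Finset.sum_range_sub' (fun t => f (θ t)),
      Finset.sum_const, Finset.card_range, ← Finset.mul_sum] at h3
    have h4 : finf ≤ f (θ (T + 1)) := hbound _
    rw [hS]
    simp only [nsmul_eq_mul] at h3
    push_cast at h3 ⊢
    linarith
  -- final algebra
  have hK : (0:ℝ) < (T + 1 : ℝ) * Real.sqrt m * γ * η := by positivity
  rw [← mul_le_mul_iff_right₀ hK]
  calc (T + 1 : ℝ) * Real.sqrt m * γ * η * (1 / (T + 1 : ℝ) * S)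
      = η * Real.sqrt m * γ * S := by field_simp
    _ ≤ (f (θ 0) - finf) + (T + 1 : ℝ) * (L / 2 * (η ^ 2 * (m:ℝ) ^ 2)) := hsum
    _ = (T + 1 : ℝ) * Real.sqrt m * γ * η *
          ((f (θ 0) - finf) / ((T + 1 : ℝ) * Real.sqrt m * γ * η) +
            L * ((m : ℝ) * Real.sqrt m) * η / (2 * γ)) := by
        rw [mul_add, mul_div_cancel₀ _ (ne_of_gt hK)]
        have : (T + 1 : ℝ) * Real.sqrt m * γ * η * (L * ((m : ℝ) * Real.sqrt m) * η / (2 * γ))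
            = (T + 1 : ℝ) * (L / 2 * (η ^ 2 * (m:ℝ) ^ 2)) := by
          field_simp
          linear_combination L * hmm
        rw [this]
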